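/- Let k, r, n ∈ ℕ with k even and k ≤ r ≤ n, and let ℓ ∈ ℕ be even. Let A be the Kikuchi matrix with parameter r of a k-uniform hypergraph H on n vertices, and let Γ = D + d·Id where D is the degree matrix and d > 0 is the average degree of the Kikuchi graph. If H has no even cover of size at most ℓ, then ‖Γ^{-1/2} A Γ^{-1/2}‖₂ < 2 n^{r/ℓ} √(ℓ/d). -/

import Mathlib

set_option linter.unusedSectionVars false
set_option maxHeartbeats 1000000

open Matrix

/-- Vertices of the Kikuchi graph: `r`-element subsets of `[n]`. -/
abbrev KikuchiVert (n r : ℕ) := {S : Finset (Fin n) // S.card = r}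

/-- An even cover of a hypergraph `H` is a nonempty subcollection of its hyperedges in which
every vertex appears an even number of times. -/
def EvenCover {n : ℕ} (H E : Finset (Finset (Fin n))) : Prop :=
  E ⊆ H ∧ E.Nonempty ∧ ∀ v : Fin n, Even ((E.filter (fun C => v ∈ C)).card)

/-- The spectral norm (ℓ2 → ℓ2 operator norm) of a real square matrix. -/
noncomputable def specNorm {m : Type*} [Fintype m] [DecidableEq m] (M : Matrix m m ℝ) : ℝ :=
  ‖LinearMap.toContinuousLinearMap (Matrix.toEuclideanLin M)‖

/-- The degree of a vertex `S` in the Kikuchi graph of `H`. -/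
def kikuchiDeg {n : ℕ} (H : Finset (Finset (Fin n))) {r : ℕ} (S : KikuchiVert n r) : ℕ :=
  (Finset.univ.filter (fun T : KikuchiVert n r => S ≠ T ∧ symmDiff S.1 T.1 ∈ H)).card

/-! ### Generic spectral lemmas -/

section Spec

open scoped Matrix.Norms.L2Operator

variable {ι : Type*} [Fintype ι] [DecidableEq ι]

lemma specNorm_eq_l2 (M : Matrix ι ι ℝ) : specNorm M = ‖M‖ := rfl

lemma specNorm_nonneg (M : Matrix ι ι ℝ) : 0 ≤ specNorm M := norm_nonneg _

lemma isSelfAdjoint_of_isSymm (M : Matrix ι ι ℝ) (hM : M.IsSymm) : _root_.IsSelfAdjoint M := by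
  show star M = M
  rw [Matrix.star_eq_conjTranspose]
  ext i j
  simp [Matrix.conjTranspose_apply, hM.apply]

/-- For a symmetric matrix, `‖M‖^t ≤ ‖M^t‖`. -/
lemma specNorm_pow_le (M : Matrix ι ι ℝ) (hM : M.IsSymm) (t : ℕ) (ht : 0 < t) :
    specNorm M ^ t ≤ specNorm (M ^ t) := by
  have hsa := isSelfAdjoint_of_isSymm M hM
  simp only [specNorm_eq_l2]
  rcases eq_or_lt_of_le (norm_nonneg M) with h0 | h0
  · have : ‖M‖ = 0 := h0.symm
    rw [this, zero_pow ht.ne']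
    exact norm_nonneg _
  · -- ‖M‖ > 0
    have hlt : t < 2 ^ t := Nat.lt_two_pow_self
    have hkey : ‖M‖ ^ 2 ^ t = ‖M ^ 2 ^ t‖ := by
      have := hsa.nnnorm_pow_two_pow t
      calc ‖M‖ ^ 2 ^ t = ((‖M‖₊ ^ 2 ^ t : NNReal) : ℝ) := by push_cast; rfl
        _ = ((‖M ^ 2 ^ t‖₊ : NNReal) : ℝ) := by rw [this]
        _ = ‖M ^ 2 ^ t‖ := rfl
    have hsplit : M ^ 2 ^ t = M ^ t * M ^ (2 ^ t - t) := by
      rw [← pow_add]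
      congr 1
      omega
    have hb : ‖M ^ 2 ^ t‖ ≤ ‖M ^ t‖ * ‖M‖ ^ (2 ^ t - t) := by
      rw [hsplit]
      calc ‖M ^ t * M ^ (2 ^ t - t)‖ ≤ ‖M ^ t‖ * ‖M ^ (2 ^ t - t)‖ := norm_mul_le _ _
        _ ≤ ‖M ^ t‖ * ‖M‖ ^ (2 ^ t - t) := by
            gcongr
            exact norm_pow_le' M (by omega)
    have hpowpos : (0:ℝ) < ‖M‖ ^ (2 ^ t - t) := pow_pos h0 _
    have : ‖M‖ ^ t * ‖M‖ ^ (2 ^ t - t) ≤ ‖M ^ t‖ * ‖M‖ ^ (2 ^ t - t) := by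
      rw [← pow_add]
      have : t + (2 ^ t - t) = 2 ^ t := by omega
      rw [this, hkey]
      exact hb
    exact le_of_mul_le_mul_right this hpowpos

/-- Operator norm squared is at most the sum of squares of entries. -/
lemma specNorm_sq_le_frob (X : Matrix ι ι ℝ) :
    specNorm X ^ 2 ≤ ∑ i, ∑ j, X i j ^ 2 := by
  have hC : (0:ℝ) ≤ Real.sqrt (∑ i, ∑ j, X i j ^ 2) := Real.sqrt_nonneg _
  have hCsq : Real.sqrt (∑ i, ∑ j, X i j ^ 2) ^ 2 = ∑ i, ∑ j, X i j ^ 2 :=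
    Real.sq_sqrt (Finset.sum_nonneg fun i _ => Finset.sum_nonneg fun j _ => sq_nonneg _)
  have hb : specNorm X ≤ Real.sqrt (∑ i, ∑ j, X i j ^ 2) := by
    rw [specNorm]
    apply ContinuousLinearMap.opNorm_le_bound _ hC
    intro v
    have hv : (LinearMap.toContinuousLinearMap (Matrix.toEuclideanLin X)) v
        = Matrix.toEuclideanLin X v := rfl
    rw [hv]
    have hnorm : ∀ (w : EuclideanSpace ℝ ι), ‖w‖ = Real.sqrt (∑ i, w i ^ 2) := by
      intro w
      rw [EuclideanSpace.norm_eq]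
      simp_rw [Real.norm_eq_abs, sq_abs]
    rw [hnorm, hnorm]
    rw [← Real.sqrt_mul (show (0:ℝ) ≤ ∑ i, ∑ j, X i j ^ 2 from
      Finset.sum_nonneg fun i _ => Finset.sum_nonneg fun j _ => sq_nonneg _)]
    apply Real.sqrt_le_sqrt
    have happly : ∀ i, (Matrix.toEuclideanLin X v) i = ∑ j, X i j * v j := by
      intro i
      simp [Matrix.toEuclideanLin_apply, Matrix.mulVec, dotProduct]
    calc ∑ i, (Matrix.toEuclideanLin X v) i ^ 2
        = ∑ i, (∑ j, X i j * v j) ^ 2 := by simp_rw [happly]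
      _ ≤ ∑ i, (∑ j, X i j ^ 2) * (∑ j, v j ^ 2) := by
          apply Finset.sum_le_sum
          intro i _
          exact Finset.sum_mul_sq_le_sq_mul_sq _ _ _
      _ = (∑ i, ∑ j, X i j ^ 2) * (∑ j, v j ^ 2) := by rw [← Finset.sum_mul]
  calc specNorm X ^ 2 ≤ Real.sqrt (∑ i, ∑ j, X i j ^ 2) ^ 2 := by
        apply pow_le_pow_left₀ (specNorm_nonneg X) hb
    _ = ∑ i, ∑ j, X i j ^ 2 := hCsq

/-- For a symmetric matrix and positive `m`, `‖M‖^(2m) ≤ tr(M^(2m))`. -/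
lemma specNorm_pow_le_trace (M : Matrix ι ι ℝ) (hM : M.IsSymm) (m : ℕ) (hm : 0 < m) :
    specNorm M ^ (2 * m) ≤ Matrix.trace (M ^ (2 * m)) := by
  have hMm : (M ^ m).IsSymm := by
    rw [Matrix.IsSymm, Matrix.transpose_pow, hM.eq]
  have h1 : specNorm M ^ (2 * m) = (specNorm M ^ m) ^ 2 := by ring
  have h2 : (specNorm M ^ m) ^ 2 ≤ specNorm (M ^ m) ^ 2 := by
    apply pow_le_pow_left₀ (pow_nonneg (specNorm_nonneg M) m)
    exact specNorm_pow_le M hM m hm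
  have h3 : specNorm (M ^ m) ^ 2 ≤ ∑ i, ∑ j, (M ^ m) i j ^ 2 := specNorm_sq_le_frob _
  have h4 : ∑ i, ∑ j, (M ^ m) i j ^ 2 = Matrix.trace (M ^ (2 * m)) := by
    have : M ^ (2 * m) = (M ^ m) * (M ^ m) := by rw [two_mul, pow_add]
    rw [this, Matrix.trace]
    simp only [Matrix.diag_apply, Matrix.mul_apply]
    rw [Finset.sum_comm]
    apply Finset.sum_congr rfl
    intro i _
    apply Finset.sum_congr rfl
    intro j _
    have : (M ^ m) j i = (M ^ m) i j := by
      conv_lhs => rw [← hMm.eq]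
      rfl
    rw [this]; ring
  linarith

end Spec

/-! ### Kikuchi walk machinery -/

section Kikuchi

variable {n r : ℕ} (H : Finset (Finset (Fin n))) (d : ℝ)

/-- `Γ` diagonal entries. -/
noncomputable def gam (S : KikuchiVert n r) : ℝ := (kikuchiDeg H S : ℝ) + d

/-- A step from `S` using hyperedge `C` is OK. -/
abbrev stepOK (S : KikuchiVert n r) (C : Finset (Fin n)) : Prop :=
  C ∈ H ∧ (symmDiff S.1 C).card = r ∧ symmDiff S.1 C ≠ S.1

/-- Target of a step (total function). -/
def stepT (S : KikuchiVert n r) (C : Finset (Fin n)) : KikuchiVert n r :=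
  if h : (symmDiff S.1 C).card = r then ⟨symmDiff S.1 C, h⟩ else S

/-- Weighted walk sum: weight of a single walk given by edge list `cs`, times `φ` at endpoint. -/
noncomputable def wS : List (Finset (Fin n)) → KikuchiVert n r → (KikuchiVert n r → ℝ) → ℝ
  | [], S, φ => φ S
  | C :: cs, S, φ =>
    if stepOK H S C then (gam H d S)⁻¹ * wS cs (stepT S C) φ else 0

variable {H d}

lemma gam_pos (hd0 : 0 < d) (S : KikuchiVert n r) : 0 < gam H d S := by
  have : (0:ℝ) ≤ (kikuchiDeg H S : ℝ) := Nat.cast_nonneg _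
  unfold gam; linarith

lemma gam_inv_le (hd0 : 0 < d) (S : KikuchiVert n r) : (gam H d S)⁻¹ ≤ d⁻¹ := by
  apply inv_anti₀ hd0
  have : (0:ℝ) ≤ (kikuchiDeg H S : ℝ) := Nat.cast_nonneg _
  unfold gam; linarith

lemma wS_nonneg (hd0 : 0 < d) (cs : List (Finset (Fin n))) (S : KikuchiVert n r)
    (φ : KikuchiVert n r → ℝ) (hφ : ∀ T, 0 ≤ φ T) : 0 ≤ wS H d cs S φ := by
  induction cs generalizing S with
  | nil => exact hφ S
  | cons C cs ih =>
    rw [wS]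
    split
    · exact mul_nonneg (le_of_lt (inv_pos.mpr (gam_pos hd0 S))) (ih _)
    · exact le_rfl

end Kikuchi

/-! ### Sum reindexing over tuples -/

lemma sum_fn_succ {α β : Type*} [Fintype α] [AddCommMonoid β] (t : ℕ)
    (F : (Fin (t + 1) → α) → β) :
    ∑ f : Fin (t + 1) → α, F f = ∑ a : α, ∑ g : Fin t → α, F (Fin.cons a g) := by
  calc ∑ f : Fin (t + 1) → α, F f
      = ∑ p : α × (Fin t → α), F (Fin.cons p.1 p.2) :=
        (Fintype.sum_equiv (Fin.consEquiv (fun _ => α)) _ _ (fun p => rfl)).symm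
    _ = ∑ a : α, ∑ g : Fin t → α, F (Fin.cons a g) :=
        Fintype.sum_prod_type (f := fun p : α × (Fin t → α) => F (Fin.cons p.1 p.2))

/-! ### More Kikuchi machinery -/

section Kikuchi2

variable {n r : ℕ} {H : Finset (Finset (Fin n))} {d : ℝ}

lemma stepT_val (S : KikuchiVert n r) (C : Finset (Fin n))
    (h : (symmDiff S.1 C).card = r) : (stepT S C).1 = symmDiff S.1 C := by
  rw [stepT, dif_pos h]

lemma sum_stepOK (S : KikuchiVert n r) (f : KikuchiVert n r → ℝ) :
    ∑ T : KikuchiVert n r, (if S ≠ T ∧ symmDiff S.1 T.1 ∈ H then f T else 0)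
      = ∑ C : Finset (Fin n), (if stepOK H S C then f (stepT S C) else 0) := by
  rw [← Finset.sum_filter, ← Finset.sum_filter]
  apply Finset.sum_bij' (i := fun T _ => symmDiff S.1 T.1)
    (j := fun C _ => stepT S C)
  · intro T hT
    rw [Finset.mem_filter] at hT ⊢
    obtain ⟨-, hne, hmem⟩ := hT
    refine ⟨Finset.mem_univ _, hmem, ?_, ?_⟩
    · rw [symmDiff_symmDiff_cancel_left]; exact T.2
    · rw [symmDiff_symmDiff_cancel_left]
      intro h
      exact hne (Subtype.ext h.symm)
  · intro C hC
    rw [Finset.mem_filter] at hC ⊢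
    obtain ⟨-, hmem, hcard, hne⟩ := hC
    refine ⟨Finset.mem_univ _, ?_, ?_⟩
    · intro h
      apply hne
      have := congrArg Subtype.val h
      rw [stepT_val S C hcard] at this
      exact this.symm
    · rw [stepT_val S C hcard, symmDiff_symmDiff_cancel_left]
      exact hmem
  · intro T hT
    rw [Finset.mem_filter] at hT
    apply Subtype.ext
    rw [stepT_val S _ (by rw [symmDiff_symmDiff_cancel_left]; exact T.2),
      symmDiff_symmDiff_cancel_left]
  · intro C hC
    rw [Finset.mem_filter] at hC
    rw [stepT_val S C hC.2.2.1, symmDiff_symmDiff_cancel_left]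
  · intro T hT
    rw [Finset.mem_filter] at hT
    congr 1
    apply Subtype.ext
    rw [stepT_val S _ (by rw [symmDiff_symmDiff_cancel_left]; exact T.2),
      symmDiff_symmDiff_cancel_left]

lemma card_stepOK (S : KikuchiVert n r) :
    ((Finset.univ : Finset (Finset (Fin n))).filter (stepOK H S)).card = kikuchiDeg H S := by
  have h := sum_stepOK (H := H) S (fun _ => (1 : ℝ))
  rw [Finset.sum_boole, Finset.sum_boole] at h
  have : ((Finset.univ.filter fun T : KikuchiVert n r =>
      S ≠ T ∧ symmDiff S.1 T.1 ∈ H).card : ℝ)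
      = ((Finset.univ.filter (stepOK H S)).card : ℝ) := h
  rw [kikuchiDeg]
  exact_mod_cast this.symm

/-- The adjacency matrix of the Kikuchi graph. -/
def Amat (n r : ℕ) (H : Finset (Finset (Fin n))) : Matrix (KikuchiVert n r) (KikuchiVert n r) ℝ :=
  Matrix.of (fun S T : KikuchiVert n r =>
    if S ≠ T ∧ symmDiff S.1 T.1 ∈ H then (1 : ℝ) else 0)

/-- The row-normalized matrix `Γ⁻¹ A`. -/
noncomputable def Bmat (n r : ℕ) (H : Finset (Finset (Fin n))) (d : ℝ) :
    Matrix (KikuchiVert n r) (KikuchiVert n r) ℝ :=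
  Matrix.of (fun S T : KikuchiVert n r => (gam H d S)⁻¹ * Amat n r H S T)

lemma Amat_isSymm : (Amat n r H).IsSymm := by
  ext S T
  show Amat n r H T S = Amat n r H S T
  unfold Amat
  simp only [Matrix.of_apply]
  congr 1
  rw [eq_iff_iff]
  constructor
  · rintro ⟨h1, h2⟩; exact ⟨h1.symm, by rwa [symmDiff_comm]⟩
  · rintro ⟨h1, h2⟩; exact ⟨h1.symm, by rwa [symmDiff_comm]⟩

lemma Bmat_nonneg (hd0 : 0 < d) (S T : KikuchiVert n r) : 0 ≤ Bmat n r H d S T := by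
  unfold Bmat Amat
  simp only [Matrix.of_apply]
  apply mul_nonneg (le_of_lt (inv_pos.mpr (gam_pos hd0 S)))
  split <;> norm_num

lemma Bmat_row (S : KikuchiVert n r) (ψ : KikuchiVert n r → ℝ) :
    ∑ T, Bmat n r H d S T * ψ T
      = ∑ C : Finset (Fin n), (if stepOK H S C then (gam H d S)⁻¹ * ψ (stepT S C) else 0) := by
  rw [← sum_stepOK S (fun T => (gam H d S)⁻¹ * ψ T)]
  apply Finset.sum_congr rfl
  intro T _
  unfold Bmat Amat
  simp only [Matrix.of_apply]
  split <;> ring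

lemma Bmat_row_sum (S : KikuchiVert n r) :
    ∑ T, Bmat n r H d S T = (kikuchiDeg H S : ℝ) * (gam H d S)⁻¹ := by
  have h := Bmat_row (H := H) (d := d) S (fun _ => (1 : ℝ))
  simp only [mul_one] at h
  rw [h, ← Finset.sum_filter, Finset.sum_const, card_stepOK, nsmul_eq_mul]

lemma Bpow_apply (t : ℕ) (S : KikuchiVert n r) (φ : KikuchiVert n r → ℝ) :
    ∑ T, (Bmat n r H d ^ t) S T * φ T
      = ∑ cs : Fin t → Finset (Fin n), wS H d (List.ofFn cs) S φ := by
  induction t generalizing S with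
  | zero =>
    simp only [pow_zero, Matrix.one_apply]
    have h1 : ∑ T : KikuchiVert n r, (if S = T then (1:ℝ) else 0) * φ T
        = ∑ T : KikuchiVert n r, if S = T then φ T else 0 :=
      Finset.sum_congr rfl (fun T _ => by rw [ite_mul, one_mul, zero_mul])
    rw [h1, Finset.sum_ite_eq]
    simp only [Finset.mem_univ, if_true]
    have huniq : ∀ cs : Fin 0 → Finset (Fin n), wS H d (List.ofFn cs) S φ = φ S := by
      intro cs
      rw [List.ofFn_zero]
      rfl
    rw [Finset.sum_congr rfl (fun cs _ => huniq cs), Finset.sum_const, Finset.card_univ]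
    have : Fintype.card (Fin 0 → Finset (Fin n)) = 1 := by
      rw [Fintype.card_fun]
      simp
    rw [this, one_smul]
  | succ t ih =>
    rw [pow_succ']
    have hexp : ∀ T, (Bmat n r H d * Bmat n r H d ^ t) S T
        = ∑ R, Bmat n r H d S R * (Bmat n r H d ^ t) R T := fun T => Matrix.mul_apply
    calc ∑ T, (Bmat n r H d * Bmat n r H d ^ t) S T * φ T
        = ∑ T, ∑ R, Bmat n r H d S R * (Bmat n r H d ^ t) R T * φ T := by
          apply Finset.sum_congr rfl
          intro T _
          rw [hexp T, Finset.sum_mul]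
      _ = ∑ R, Bmat n r H d S R * (∑ T, (Bmat n r H d ^ t) R T * φ T) := by
          rw [Finset.sum_comm]
          apply Finset.sum_congr rfl
          intro R _
          rw [Finset.mul_sum]
          apply Finset.sum_congr rfl
          intro T _
          ring
      _ = ∑ R, Bmat n r H d S R * (∑ cs : Fin t → Finset (Fin n), wS H d (List.ofFn cs) R φ) := by
          apply Finset.sum_congr rfl
          intro R _
          rw [ih R]
      _ = ∑ C : Finset (Fin n), (if stepOK H S C then
            (gam H d S)⁻¹ * (∑ cs : Fin t → Finset (Fin n), wS H d (List.ofFn cs) (stepT S C) φ)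
            else 0) := Bmat_row S _
      _ = ∑ cs : Fin (t+1) → Finset (Fin n), wS H d (List.ofFn cs) S φ := by
          rw [sum_fn_succ t (fun cs => wS H d (List.ofFn cs) S φ)]
          apply Finset.sum_congr rfl
          intro C _
          rw [Finset.mul_sum]
          by_cases hok : stepOK H S C
          · rw [if_pos hok]
            apply Finset.sum_congr rfl
            intro g _
            rw [List.ofFn_succ]
            simp only [Fin.cons_zero, Fin.cons_succ]
            rw [wS, if_pos hok]
          · rw [if_neg hok]
            symm
            apply Finset.sum_eq_zero
            intro g _
            rw [List.ofFn_succ]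
            simp only [Fin.cons_zero, Fin.cons_succ]
            rw [wS, if_neg hok]

end Kikuchi2

/-! ### The recursive bound -/

/-- Recursive bound: `Pb q t b` bounds the weighted number of walks of length `t`
with "new-edge budget" `b`, where each "old" step costs a factor `q`. -/
noncomputable def Pb (q : ℝ) : ℕ → ℕ → ℝ
  | 0, _ => 1
  | t + 1, 0 => q * Pb q t 0
  | t + 1, b + 1 => Pb q t b + q * Pb q t (b + 1)

lemma Pb_nonneg {q : ℝ} (hq : 0 ≤ q) : ∀ t b, 0 ≤ Pb q t b := by
  intro t
  induction t with
  | zero => intro b; rw [Pb]; norm_num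
  | succ t ih =>
    intro b
    match b with
    | 0 => rw [Pb]; exact mul_nonneg hq (ih 0)
    | b + 1 => rw [Pb]; exact add_nonneg (ih b) (mul_nonneg hq (ih (b+1)))

lemma Pb_le {q : ℝ} (hq0 : 0 ≤ q) (hq1 : q ≤ 1) : ∀ t b, Pb q t b ≤ 2 ^ t * q ^ (t - b) := by
  intro t
  induction t with
  | zero => intro b; rw [Pb]; simp
  | succ t ih =>
    intro b
    match b with
    | 0 =>
      rw [Pb]
      have h1 : q * Pb q t 0 ≤ q * (2 ^ t * q ^ (t - 0)) :=
        mul_le_mul_of_nonneg_left (ih 0) hq0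
      have h2 : q * (2 ^ t * q ^ (t - 0)) = 2 ^ t * q ^ (t + 1) := by
        rw [Nat.sub_zero, pow_succ]; ring
      have h3 : (2:ℝ) ^ t * q ^ (t + 1) ≤ 2 ^ (t+1) * q ^ (t + 1 - 0) := by
        rw [Nat.sub_zero]
        apply mul_le_mul_of_nonneg_right _ (pow_nonneg hq0 _)
        apply pow_le_pow_right₀ (by norm_num) (by omega)
      linarith
    | b + 1 =>
      rw [Pb]
      have he : t + 1 - (b + 1) = t - b := by omega
      have h1 : Pb q t b ≤ 2 ^ t * q ^ (t - b) := ih b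
      have h2 : q * Pb q t (b + 1) ≤ 2 ^ t * q ^ (t - b) := by
        have := mul_le_mul_of_nonneg_left (ih (b+1)) hq0
        have heq : q * (2 ^ t * q ^ (t - (b+1))) = 2 ^ t * q ^ (t - (b+1) + 1) := by
          rw [pow_succ]; ring
        have hle : q ^ (t - (b+1) + 1) ≤ q ^ (t - b) :=
          pow_le_pow_of_le_one hq0 hq1 (by omega)
        calc q * Pb q t (b + 1) ≤ q * (2 ^ t * q ^ (t - (b+1))) := this
          _ = 2 ^ t * q ^ (t - (b+1) + 1) := heq
          _ ≤ 2 ^ t * q ^ (t - b) := by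
              apply mul_le_mul_of_nonneg_left hle (by positivity)
      rw [he]
      have : (2:ℝ) ^ (t + 1) = 2 ^ t + 2 ^ t := by ring
      rw [this, add_mul]
      linarith

section KikuchiBound

variable {n r : ℕ} {H : Finset (Finset (Fin n))} {d : ℝ}

/-- Sum of walk weights of length `t` from `S`, restricted to walks whose used-edge set,
together with `U`, stays of size at most `m`. -/
noncomputable def WB (H : Finset (Finset (Fin n))) (d : ℝ) (m t : ℕ) (S : KikuchiVert n r)
    (U : Finset (Finset (Fin n))) : ℝ :=
  ∑ cs : Fin t → Finset (Fin n),
    if (U ∪ (List.ofFn cs).toFinset).card ≤ m then wS H d (List.ofFn cs) S (fun _ => 1) else 0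

lemma WB_nonneg (hd0 : 0 < d) (m t : ℕ) (S : KikuchiVert n r) (U : Finset (Finset (Fin n))) :
    0 ≤ WB H d m t S U := by
  apply Finset.sum_nonneg
  intro cs _
  split
  · exact wS_nonneg hd0 _ _ _ (fun _ => zero_le_one)
  · exact le_rfl

lemma WB_zero (m t : ℕ) (S : KikuchiVert n r) (U : Finset (Finset (Fin n)))
    (hU : m < U.card) : WB H d m t S U = 0 := by
  apply Finset.sum_eq_zero
  intro cs _
  rw [if_neg]
  intro hcon
  have : U.card ≤ (U ∪ (List.ofFn cs).toFinset).card :=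
    Finset.card_le_card Finset.subset_union_left
  omega

lemma WB_succ (m t : ℕ) (S : KikuchiVert n r) (U : Finset (Finset (Fin n))) :
    WB H d m (t + 1) S U
      = ∑ C : Finset (Fin n), (if stepOK H S C then
          (gam H d S)⁻¹ * WB H d m t (stepT S C) (insert C U) else 0) := by
  rw [WB, sum_fn_succ]
  apply Finset.sum_congr rfl
  intro C _
  have hofn : ∀ g : Fin t → Finset (Fin n),
      List.ofFn (Fin.cons C g : Fin (t+1) → Finset (Fin n)) = C :: List.ofFn g := by
    intro g
    rw [List.ofFn_succ]
    simp only [Fin.cons_zero, Fin.cons_succ]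
  have hset : ∀ X : Finset (Finset (Fin n)), U ∪ insert C X = insert C U ∪ X := by
    intro X
    rw [Finset.union_insert, Finset.insert_union]
  by_cases hok : stepOK H S C
  · rw [if_pos hok, WB, Finset.mul_sum]
    apply Finset.sum_congr rfl
    intro g _
    rw [hofn g, List.toFinset_cons, hset, wS, if_pos hok]
    split
    · rfl
    · rw [mul_zero]
  · rw [if_neg hok]
    apply Finset.sum_eq_zero
    intro g _
    rw [hofn g, wS, if_neg hok]
    split <;> rfl

lemma deg_gam_le_one (hd0 : 0 < d) (S : KikuchiVert n r) :
    (kikuchiDeg H S : ℝ) * (gam H d S)⁻¹ ≤ 1 := by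
  rw [← div_eq_mul_inv]
  apply div_le_one_of_le₀
  · rw [gam]; linarith
  · exact le_of_lt (gam_pos hd0 S)

lemma WB_le_Pb (hd0 : 0 < d) (m : ℕ) :
    ∀ (t : ℕ) (S : KikuchiVert n r) (U : Finset (Finset (Fin n))),
      WB H d m t S U ≤ Pb ((m : ℝ) / d) t (m - U.card) := by
  have hq0 : (0:ℝ) ≤ (m : ℝ) / d := by positivity
  intro t
  induction t with
  | zero =>
    intro S U
    rw [WB, Pb]
    have : Fintype.card (Fin 0 → Finset (Fin n)) = 1 := by
      rw [Fintype.card_fun]; simp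
    calc ∑ cs : Fin 0 → Finset (Fin n),
          (if (U ∪ (List.ofFn cs).toFinset).card ≤ m then wS H d (List.ofFn cs) S (fun _ => 1) else 0)
        ≤ ∑ cs : Fin 0 → Finset (Fin n), 1 := by
          apply Finset.sum_le_sum
          intro cs _
          split
          · rw [List.ofFn_zero]; exact le_rfl
          · norm_num
      _ = 1 := by rw [Finset.sum_const, Finset.card_univ, this, one_smul]
  | succ t ih =>
    intro S U
    by_cases hUm : m < U.card
    · rw [WB_zero m (t+1) S U hUm]
      exact Pb_nonneg hq0 _ _
    push_neg at hUm
    rw [WB_succ]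
    rw [← Finset.sum_filter_add_sum_filter_not Finset.univ (fun C => C ∈ U)]
    have hfilter : Finset.univ.filter (fun C : Finset (Fin n) => C ∈ U) = U := by
      ext C; simp
    -- old steps
    have hold : ∑ C ∈ Finset.univ.filter (fun C : Finset (Fin n) => C ∈ U),
        (if stepOK H S C then (gam H d S)⁻¹ * WB H d m t (stepT S C) (insert C U) else 0)
        ≤ ((m:ℝ)/d) * Pb ((m : ℝ) / d) t (m - U.card) := by
      rw [hfilter]
      have hterm : ∀ C ∈ U,
          (if stepOK H S C then (gam H d S)⁻¹ * WB H d m t (stepT S C) (insert C U) else 0)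
          ≤ d⁻¹ * Pb ((m : ℝ) / d) t (m - U.card) := by
        intro C hC
        have hins : insert C U = U := Finset.insert_eq_self.mpr hC
        split
        · rw [hins]
          exact mul_le_mul (gam_inv_le hd0 S) (ih (stepT S C) U)
            (WB_nonneg hd0 _ _ _ _) (by positivity)
        · exact mul_nonneg (by positivity) (Pb_nonneg hq0 _ _)
      calc ∑ C ∈ U, (if stepOK H S C then
              (gam H d S)⁻¹ * WB H d m t (stepT S C) (insert C U) else 0)
          ≤ U.card • (d⁻¹ * Pb ((m : ℝ) / d) t (m - U.card)) :=
            Finset.sum_le_card_nsmul U _ _ hterm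
        _ = (U.card : ℝ) * d⁻¹ * Pb ((m : ℝ) / d) t (m - U.card) := by
            rw [nsmul_eq_mul]; ring
        _ ≤ ((m:ℝ)/d) * Pb ((m : ℝ) / d) t (m - U.card) := by
            apply mul_le_mul_of_nonneg_right _ (Pb_nonneg hq0 _ _)
            rw [div_eq_mul_inv]
            apply mul_le_mul_of_nonneg_right _ (by positivity)
            exact_mod_cast hUm
    rcases eq_or_lt_of_le hUm with heq | hlt
    · -- U.card = m : no new steps possible
      have hnew : ∑ C ∈ Finset.univ.filter (fun C : Finset (Fin n) => ¬ C ∈ U),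
          (if stepOK H S C then (gam H d S)⁻¹ * WB H d m t (stepT S C) (insert C U) else 0)
          = 0 := by
        apply Finset.sum_eq_zero
        intro C hC
        rw [Finset.mem_filter] at hC
        have : WB H d m t (stepT S C) (insert C U) = 0 := by
          apply WB_zero
          rw [Finset.card_insert_of_notMem hC.2]
          omega
        rw [this, mul_zero, ite_self]
      rw [hnew, add_zero]
      have hb : m - U.card = 0 := by omega
      rw [hb, Pb]
      have hb0 : m - (U.card) = 0 := hb
      calc _ ≤ ((m:ℝ)/d) * Pb ((m : ℝ) / d) t (m - U.card) := hold
        _ = ((m:ℝ)/d) * Pb ((m : ℝ) / d) t 0 := by rw [hb]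
    · -- U.card < m : new steps consume budget
      have hnew : ∑ C ∈ Finset.univ.filter (fun C : Finset (Fin n) => ¬ C ∈ U),
          (if stepOK H S C then (gam H d S)⁻¹ * WB H d m t (stepT S C) (insert C U) else 0)
          ≤ Pb ((m : ℝ) / d) t (m - (U.card + 1)) := by
        have hterm : ∀ C ∈ Finset.univ.filter (fun C : Finset (Fin n) => ¬ C ∈ U),
            (if stepOK H S C then (gam H d S)⁻¹ * WB H d m t (stepT S C) (insert C U) else 0)
            ≤ (if stepOK H S C then (gam H d S)⁻¹ else 0) * Pb ((m : ℝ) / d) t (m - (U.card + 1)) := by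
          intro C hC
          rw [Finset.mem_filter] at hC
          split
          · have hcard : (insert C U).card = U.card + 1 := Finset.card_insert_of_notMem hC.2
            have := ih (stepT S C) (insert C U)
            rw [hcard] at this
            exact mul_le_mul_of_nonneg_left this (le_of_lt (inv_pos.mpr (gam_pos hd0 S)))
          · rw [zero_mul]
        calc ∑ C ∈ Finset.univ.filter (fun C : Finset (Fin n) => ¬ C ∈ U),
              (if stepOK H S C then (gam H d S)⁻¹ * WB H d m t (stepT S C) (insert C U) else 0)
            ≤ ∑ C ∈ Finset.univ.filter (fun C : Finset (Fin n) => ¬ C ∈ U),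
              (if stepOK H S C then (gam H d S)⁻¹ else 0) * Pb ((m : ℝ) / d) t (m - (U.card + 1)) :=
              Finset.sum_le_sum hterm
          _ ≤ ∑ C : Finset (Fin n),
              (if stepOK H S C then (gam H d S)⁻¹ else 0) * Pb ((m : ℝ) / d) t (m - (U.card + 1)) := by
              apply Finset.sum_le_sum_of_subset_of_nonneg (Finset.filter_subset _ _)
              intro C _ _
              apply mul_nonneg _ (Pb_nonneg hq0 _ _)
              split
              · exact le_of_lt (inv_pos.mpr (gam_pos hd0 S))
              · exact le_rfl
          _ = ((kikuchiDeg H S : ℝ) * (gam H d S)⁻¹) * Pb ((m : ℝ) / d) t (m - (U.card + 1)) := by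
              rw [← Finset.sum_mul]
              congr 1
              rw [← Finset.sum_filter, Finset.sum_const, card_stepOK, nsmul_eq_mul]
          _ ≤ 1 * Pb ((m : ℝ) / d) t (m - (U.card + 1)) :=
              mul_le_mul_of_nonneg_right (deg_gam_le_one hd0 S) (Pb_nonneg hq0 _ _)
          _ = Pb ((m : ℝ) / d) t (m - (U.card + 1)) := one_mul _
      have hsplit : m - U.card = (m - (U.card + 1)) + 1 := by omega
      rw [hsplit, Pb]
      have : m - (U.card + 1) + 1 = m - U.card := by omega
      rw [this]
      have := add_le_add hnew hold
      linarith [this]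

end KikuchiBound

/-! ### Parity analysis of closed walks -/

section Parity

variable {n : ℕ}

lemma list_parity (cs : List (Finset (Fin n))) (v : Fin n) :
    (if v ∈ cs.foldr symmDiff ∅ then (1 : ZMod 2) else 0)
      = (cs.map (fun C => if v ∈ C then (1 : ZMod 2) else 0)).sum := by
  induction cs with
  | nil => simp
  | cons C cs ih =>
    rw [List.foldr_cons, List.map_cons, List.sum_cons, ← ih]
    by_cases h1 : v ∈ C <;> by_cases h2 : v ∈ cs.foldr symmDiff ∅ <;>
      simp [Finset.mem_symmDiff, h1, h2] <;> decide

lemma nsmul_even {x : ZMod 2} {c : ℕ} (hc : Even c) : c • x = 0 := by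
  obtain ⟨k, rfl⟩ := hc
  have h0 : ((k + k : ℕ) : ZMod 2) = 0 := by
    rw [ZMod.natCast_eq_zero_iff]
    omega
  rw [nsmul_eq_mul, h0, zero_mul]

lemma nsmul_odd {x : ZMod 2} {c : ℕ} (hc : ¬ Even c) : c • x = x := by
  obtain ⟨k, rfl⟩ := Nat.not_even_iff_odd.mp hc
  have h1 : ((2 * k + 1 : ℕ) : ZMod 2) = 1 := by
    push_cast
    have h2 : (2 : ZMod 2) = 0 := by decide
    rw [h2]
    ring
  rw [nsmul_eq_mul, h1, one_mul]

lemma closed_walk_card {H : Finset (Finset (Fin n))} {ℓ : ℕ}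
    (hcover : ∀ E : Finset (Finset (Fin n)), EvenCover H E → ℓ < E.card)
    (cs : List (Finset (Fin n))) (hlen : cs.length ≤ ℓ)
    (hmem : ∀ C ∈ cs, C ∈ H) (hfold : cs.foldr symmDiff ∅ = ∅) :
    2 * cs.toFinset.card ≤ cs.length := by
  classical
  have hsum0 : ∀ v : Fin n,
      ∑ C ∈ cs.toFinset, cs.count C • (if v ∈ C then (1 : ZMod 2) else 0) = 0 := by
    intro v
    have h1 := Finset.sum_multiset_map_count (↑cs : Multiset (Finset (Fin n)))
      (fun C => if v ∈ C then (1 : ZMod 2) else 0)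
    have h3 : (cs.map (fun C => if v ∈ C then (1 : ZMod 2) else 0)).sum = 0 := by
      rw [← list_parity, hfold]
      simp
    simp only [Multiset.map_coe, Multiset.sum_coe, List.toFinset_coe,
      Multiset.coe_count, h3] at h1
    exact h1.symm
  set oddE := cs.toFinset.filter (fun C => ¬ Even (cs.count C)) with hoddE
  have hodd_empty : oddE = ∅ := by
    by_contra hne
    have hnonempty : oddE.Nonempty := Finset.nonempty_iff_ne_empty.mpr hne
    have hEC : EvenCover H oddE := by
      refine ⟨?_, hnonempty, ?_⟩
      · intro C hC
        rw [hoddE, Finset.mem_filter] at hC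
        exact hmem C (List.mem_toFinset.mp hC.1)
      · intro v
        have hcast : ((oddE.filter (fun C => v ∈ C)).card : ZMod 2) = 0 := by
          have hc : ((oddE.filter (fun C => v ∈ C)).card : ZMod 2)
              = ∑ C ∈ oddE, (if v ∈ C then (1 : ZMod 2) else 0) := by
            rw [Finset.card_filter]
            push_cast
            rfl
          have hsplit := Finset.sum_filter_add_sum_filter_not cs.toFinset
            (fun C => ¬ Even (cs.count C))
            (fun C => cs.count C • (if v ∈ C then (1 : ZMod 2) else 0))
          have hodd_part : ∑ C ∈ cs.toFinset.filter (fun C => ¬ Even (cs.count C)),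
              cs.count C • (if v ∈ C then (1 : ZMod 2) else 0)
              = ∑ C ∈ oddE, (if v ∈ C then (1 : ZMod 2) else 0) := by
            apply Finset.sum_congr rfl
            intro C hC
            rw [Finset.mem_filter] at hC
            exact nsmul_odd hC.2
          have heven_part : ∑ C ∈ cs.toFinset.filter (fun C => ¬ ¬ Even (cs.count C)),
              cs.count C • (if v ∈ C then (1 : ZMod 2) else 0) = 0 := by
            apply Finset.sum_eq_zero
            intro C hC
            rw [Finset.mem_filter, not_not] at hC
            exact nsmul_even hC.2
          rw [hodd_part, heven_part, add_zero, hsum0 v] at hsplit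
          rw [hc]
          exact hsplit
        have : (2 : ℕ) ∣ (oddE.filter (fun C => v ∈ C)).card := by
          rwa [← ZMod.natCast_eq_zero_iff]
        exact even_iff_two_dvd.mpr this
    have h1 : oddE.card ≤ cs.toFinset.card := Finset.card_filter_le _ _
    have h2 := List.toFinset_card_le cs
    have := hcover oddE hEC
    omega
  have hcount : ∀ C ∈ cs.toFinset, 2 ≤ cs.count C := by
    intro C hC
    have hpos : 0 < cs.count C := List.count_pos_iff.mpr (List.mem_toFinset.mp hC)
    have heven : Even (cs.count C) := by
      by_contra hodd
      have hCodd : C ∈ oddE := by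
        rw [hoddE, Finset.mem_filter]
        exact ⟨hC, hodd⟩
      rw [hodd_empty] at hCodd
      simp at hCodd
    obtain ⟨k, hk⟩ := heven
    omega
  have hlen_eq : ∑ C ∈ cs.toFinset, cs.count C = cs.length := by
    have := Multiset.toFinset_sum_count_eq (↑cs : Multiset (Finset (Fin n)))
    simpa using this
  have hsumle := Finset.card_nsmul_le_sum cs.toFinset (fun C => cs.count C) 2 hcount
  rw [hlen_eq] at hsumle
  rw [smul_eq_mul] at hsumle
  omega

end Parity

/-! ### More walk lemmas and trace identities -/

section Kikuchi3

variable {n r : ℕ} {H : Finset (Finset (Fin n))} {d : ℝ}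

lemma wS_mono (hd0 : 0 < d) {φ ψ : KikuchiVert n r → ℝ} (h : ∀ T, φ T ≤ ψ T) :
    ∀ (cs : List (Finset (Fin n))) (S : KikuchiVert n r), wS H d cs S φ ≤ wS H d cs S ψ := by
  intro cs
  induction cs with
  | nil => intro S; exact h S
  | cons C cs ih =>
    intro S
    rw [wS, wS]
    split
    · exact mul_le_mul_of_nonneg_left (ih _) (le_of_lt (inv_pos.mpr (gam_pos hd0 S)))
    · exact le_rfl

lemma wS_ne_zero (cs : List (Finset (Fin n))) :
    ∀ (S : KikuchiVert n r) (φ : KikuchiVert n r → ℝ), wS H d cs S φ ≠ 0 →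
      (∀ C ∈ cs, C ∈ H) ∧
        ∃ W : KikuchiVert n r, φ W ≠ 0 ∧ W.1 = symmDiff S.1 (cs.foldr symmDiff ∅) := by
  induction cs with
  | nil =>
    intro S φ h
    refine ⟨by simp, S, h, ?_⟩
    rw [List.foldr_nil, ← Finset.bot_eq_empty, symmDiff_bot]
  | cons C cs ih =>
    intro S φ h
    rw [wS] at h
    by_cases hok : stepOK H S C
    · rw [if_pos hok] at h
      have h2 : wS H d cs (stepT S C) φ ≠ 0 := by
        intro hz
        rw [hz, mul_zero] at h
        exact h rfl
      obtain ⟨hmem, W, hφ, hW⟩ := ih (stepT S C) φ h2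
      refine ⟨?_, W, hφ, ?_⟩
      · intro D hD
        rcases List.mem_cons.mp hD with rfl | hD'
        · exact hok.1
        · exact hmem D hD'
      · rw [List.foldr_cons, ← symmDiff_assoc]
        rw [hW, stepT_val S C hok.2.1]
    · rw [if_neg hok] at h
      exact absurd rfl h

lemma Bpow_nonneg (hd0 : 0 < d) : ∀ (t : ℕ) (S T : KikuchiVert n r),
    0 ≤ (Bmat n r H d ^ t) S T := by
  intro t
  induction t with
  | zero =>
    intro S T
    rw [pow_zero, Matrix.one_apply]
    split <;> norm_num
  | succ t ih =>
    intro S T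
    rw [pow_succ', Matrix.mul_apply]
    exact Finset.sum_nonneg fun R _ => mul_nonneg (Bmat_nonneg hd0 S R) (ih R T)

lemma Bpow_rowsum_le (hd0 : 0 < d) {ρ : ℝ} (hρ : 0 ≤ ρ)
    (hrow : ∀ S : KikuchiVert n r, ∑ T, Bmat n r H d S T ≤ ρ) :
    ∀ (t : ℕ) (S : KikuchiVert n r), ∑ T, (Bmat n r H d ^ t) S T ≤ ρ ^ t := by
  intro t
  induction t with
  | zero =>
    intro S
    rw [pow_zero]
    simp only [Matrix.one_apply]
    rw [Finset.sum_ite_eq Finset.univ S (fun _ => (1:ℝ))]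
    simp
  | succ t ih =>
    intro S
    rw [pow_succ']
    calc ∑ T, (Bmat n r H d * Bmat n r H d ^ t) S T
        = ∑ T, ∑ R, Bmat n r H d S R * (Bmat n r H d ^ t) R T := by
          apply Finset.sum_congr rfl
          intro T _
          rw [Matrix.mul_apply]
      _ = ∑ R, Bmat n r H d S R * (∑ T, (Bmat n r H d ^ t) R T) := by
          rw [Finset.sum_comm]
          apply Finset.sum_congr rfl
          intro R _
          rw [Finset.mul_sum]
      _ ≤ ∑ R, Bmat n r H d S R * ρ ^ t := by
          apply Finset.sum_le_sum
          intro R _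
          exact mul_le_mul_of_nonneg_left (ih R) (Bmat_nonneg hd0 S R)
      _ = (∑ R, Bmat n r H d S R) * ρ ^ t := by rw [Finset.sum_mul]
      _ ≤ ρ * ρ ^ t := mul_le_mul_of_nonneg_right (hrow S) (pow_nonneg hρ t)
      _ = ρ ^ (t + 1) := by rw [pow_succ]; ring

lemma trace_eq_sum_diag (t : ℕ) :
    Matrix.trace (Bmat n r H d ^ t) = ∑ S, (Bmat n r H d ^ t) S S := rfl

lemma trace_Bpow_eq_walks (t : ℕ) :
    Matrix.trace (Bmat n r H d ^ t)
      = ∑ S : KikuchiVert n r, ∑ cs : Fin t → Finset (Fin n),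
          wS H d (List.ofFn cs) S (fun T => if T = S then 1 else 0) := by
  rw [trace_eq_sum_diag]
  apply Finset.sum_congr rfl
  intro S _
  rw [← Bpow_apply t S (fun T => if T = S then 1 else 0)]
  have : ∀ T : KikuchiVert n r,
      (Bmat n r H d ^ t) S T * (if T = S then 1 else 0)
        = if T = S then (Bmat n r H d ^ t) S T else 0 := by
    intro T
    split <;> simp
  rw [Finset.sum_congr rfl (fun T _ => this T), Finset.sum_ite_eq' Finset.univ S]
  simp

lemma trace_conj (hd0 : 0 < d) (t : ℕ) :
    Matrix.trace ((Matrix.diagonal (fun S : KikuchiVert n r => (gam H d S) ^ (-(1/2) : ℝ)) *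
        Amat n r H *
        Matrix.diagonal (fun S : KikuchiVert n r => (gam H d S) ^ (-(1/2) : ℝ))) ^ t)
      = Matrix.trace (Bmat n r H d ^ t) := by
  set G : Matrix (KikuchiVert n r) (KikuchiVert n r) ℝ :=
    Matrix.diagonal (fun S => (gam H d S) ^ (-(1/2) : ℝ)) with hG
  set G' : Matrix (KikuchiVert n r) (KikuchiVert n r) ℝ :=
    Matrix.diagonal (fun S => (gam H d S) ^ ((1/2) : ℝ)) with hG'
  have hG'G : G' * G = 1 := by
    rw [hG, hG', Matrix.diagonal_mul_diagonal]
    have : (fun S : KikuchiVert n r => gam H d S ^ ((1/2):ℝ) * gam H d S ^ (-(1/2):ℝ))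
        = fun _ => (1:ℝ) := by
      funext S
      rw [← Real.rpow_add (gam_pos hd0 S)]
      norm_num
    rw [this, Matrix.diagonal_one]
  have hGG' : G * G' = 1 := by
    rw [hG, hG', Matrix.diagonal_mul_diagonal]
    have : (fun S : KikuchiVert n r => gam H d S ^ (-(1/2):ℝ) * gam H d S ^ ((1/2):ℝ))
        = fun _ => (1:ℝ) := by
      funext S
      rw [← Real.rpow_add (gam_pos hd0 S)]
      norm_num
    rw [this, Matrix.diagonal_one]
  have hGG : G * G = Matrix.diagonal (fun S : KikuchiVert n r => (gam H d S)⁻¹) := by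
    rw [hG, Matrix.diagonal_mul_diagonal]
    have hfun : (fun S : KikuchiVert n r => gam H d S ^ (-(1/2):ℝ) * gam H d S ^ (-(1/2):ℝ))
        = fun S : KikuchiVert n r => (gam H d S)⁻¹ := by
      funext S
      rw [← Real.rpow_add (gam_pos hd0 S)]
      norm_num [Real.rpow_neg_one]
    rw [hfun]
  have hB : Matrix.diagonal (fun S : KikuchiVert n r => (gam H d S)⁻¹) * Amat n r H
      = Bmat n r H d := by
    ext S T
    rw [Matrix.diagonal_mul]
    rfl
  have hsemi : SemiconjBy G (G * Amat n r H * G) (Bmat n r H d) := by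
    show G * (G * Amat n r H * G) = Bmat n r H d * G
    calc G * (G * Amat n r H * G) = ((G * G) * Amat n r H) * G := by
          rw [← Matrix.mul_assoc, ← Matrix.mul_assoc]
      _ = Bmat n r H d * G := by rw [hGG, hB]
  have hpow := hsemi.pow_right t
  calc Matrix.trace ((G * Amat n r H * G) ^ t)
      = Matrix.trace ((G' * G) * (G * Amat n r H * G) ^ t) := by rw [hG'G, one_mul]
    _ = Matrix.trace (G' * (G * (G * Amat n r H * G) ^ t)) := by rw [Matrix.mul_assoc]
    _ = Matrix.trace (G' * (Bmat n r H d ^ t * G)) := by rw [hpow]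
    _ = Matrix.trace ((Bmat n r H d ^ t * G) * G') := Matrix.trace_mul_comm _ _
    _ = Matrix.trace (Bmat n r H d ^ t * (G * G')) := by rw [Matrix.mul_assoc]
    _ = Matrix.trace (Bmat n r H d ^ t) := by rw [hGG', mul_one]

lemma M_isSymm :
    (Matrix.diagonal (fun S : KikuchiVert n r => (gam H d S) ^ (-(1/2) : ℝ)) *
      Amat n r H *
      Matrix.diagonal (fun S : KikuchiVert n r => (gam H d S) ^ (-(1/2) : ℝ))).IsSymm := by
  set G : Matrix (KikuchiVert n r) (KikuchiVert n r) ℝ :=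
    Matrix.diagonal (fun S => (gam H d S) ^ (-(1/2) : ℝ)) with hG
  rw [Matrix.IsSymm, Matrix.transpose_mul, Matrix.transpose_mul]
  rw [hG, Matrix.diagonal_transpose, Amat_isSymm.eq, Matrix.mul_assoc]

lemma card_KV (n r : ℕ) : Fintype.card (KikuchiVert n r) = n.choose r := by
  rw [Fintype.card_subtype]
  have : (Finset.univ.filter fun S : Finset (Fin n) => S.card = r)
      = Finset.powersetCard r (Finset.univ : Finset (Fin n)) := by
    rw [Finset.powersetCard_eq_filter, Finset.powerset_univ]
  rw [this, Finset.card_powersetCard, Finset.card_univ, Fintype.card_fin]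

lemma KV_nonempty (hrn : r ≤ n) : Nonempty (KikuchiVert n r) := by
  obtain ⟨t, -, ht⟩ := Finset.exists_subset_card_eq (s := (Finset.univ : Finset (Fin n))) (n := r)
    (by simpa using hrn)
  exact ⟨⟨t, ht⟩⟩

end Kikuchi3

/-- If a `k`-uniform hypergraph `H` (`k` even, `k ≤ r ≤ n`) has no even cover of size at most
`ℓ` (`ℓ` even), then with `Γ = D + d·Id` for the Kikuchi matrix `A`,
`‖Γ^{-1/2} A Γ^{-1/2}‖₂ < 2 n^{r/ℓ} √(ℓ/d)`. -/
theorem kikuchi_norm_bound (n k r ℓ : ℕ) (hk : Even k) (hk0 : 0 < k)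
    (hkr : k ≤ r) (hrn : r ≤ n) (hℓeven : Even ℓ) (hℓpos : 0 < ℓ)
    (H : Finset (Finset (Fin n))) (huni : ∀ C ∈ H, C.card = k)
    (d : ℝ)
    (hd : d = (∑ S : KikuchiVert n r, (kikuchiDeg H S : ℝ)) /
        (Fintype.card (KikuchiVert n r) : ℝ))
    (hd0 : 0 < d)
    (hcover : ∀ E : Finset (Finset (Fin n)), EvenCover H E → ℓ < E.card) :
    specNorm
      (Matrix.diagonal (fun S : KikuchiVert n r => ((kikuchiDeg H S : ℝ) + d) ^ (-(1 / 2) : ℝ)) *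
        Matrix.of (fun S T : KikuchiVert n r =>
          if S ≠ T ∧ symmDiff S.1 T.1 ∈ H then (1 : ℝ) else 0) *
        Matrix.diagonal (fun S : KikuchiVert n r => ((kikuchiDeg H S : ℝ) + d) ^ (-(1 / 2) : ℝ)))
      < 2 * (n : ℝ) ^ ((r : ℝ) / ℓ) * Real.sqrt ((ℓ : ℝ) / d) := by
  classical
  obtain ⟨m, hmeq⟩ := hℓeven
  have hℓ2 : ℓ = 2 * m := by omega
  have hm0 : 0 < m := by omega
  have hn1 : 1 ≤ n := by omega
  -- identify the goal matrix with our normal form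
  have hgoal_eq :
      (Matrix.diagonal (fun S : KikuchiVert n r => ((kikuchiDeg H S : ℝ) + d) ^ (-(1 / 2) : ℝ)) *
        Matrix.of (fun S T : KikuchiVert n r =>
          if S ≠ T ∧ symmDiff S.1 T.1 ∈ H then (1 : ℝ) else 0) *
        Matrix.diagonal (fun S : KikuchiVert n r => ((kikuchiDeg H S : ℝ) + d) ^ (-(1 / 2) : ℝ)))
      = (Matrix.diagonal (fun S : KikuchiVert n r => (gam H d S) ^ (-(1/2) : ℝ)) *
          Amat n r H *
          Matrix.diagonal (fun S : KikuchiVert n r => (gam H d S) ^ (-(1/2) : ℝ))) := rfl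
  rw [hgoal_eq]
  set Mx := (Matrix.diagonal (fun S : KikuchiVert n r => (gam H d S) ^ (-(1/2) : ℝ)) *
      Amat n r H *
      Matrix.diagonal (fun S : KikuchiVert n r => (gam H d S) ^ (-(1/2) : ℝ))) with hMx
  have hx0 : 0 ≤ specNorm Mx := specNorm_nonneg _
  -- the spectral bound through the trace
  have hsym : Mx.IsSymm := M_isSymm
  have hA : specNorm Mx ^ ℓ ≤ Matrix.trace (Mx ^ ℓ) := by
    rw [hℓ2]
    exact specNorm_pow_le_trace Mx hsym m hm0
  have hB : Matrix.trace (Mx ^ ℓ) = Matrix.trace (Bmat n r H d ^ ℓ) := trace_conj hd0 ℓ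
  -- counting
  haveI : Nonempty (KikuchiVert n r) := KV_nonempty hrn
  set N := Fintype.card (KikuchiVert n r) with hN
  have hN1 : 1 ≤ N := Fintype.card_pos
  have hNle : (N : ℝ) ≤ (n : ℝ) ^ r := by
    have h1 : N ≤ n ^ r := by
      rw [hN, card_KV]
      exact Nat.choose_le_pow n r
    calc (N:ℝ) ≤ ((n ^ r : ℕ) : ℝ) := by exact_mod_cast h1
      _ = (n:ℝ) ^ r := by push_cast; ring
  -- the RHS to the ℓ-th power
  have hld : (0:ℝ) ≤ (ℓ:ℝ)/d := by positivity
  have hRHS0 : 0 ≤ 2 * (n : ℝ) ^ ((r : ℝ) / ℓ) * Real.sqrt ((ℓ : ℝ) / d) := by positivity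
  have hsq : Real.sqrt ((ℓ:ℝ)/d) ^ ℓ = ((ℓ:ℝ)/d) ^ m := by
    have hld' := hld
    rw [hℓ2] at hld' ⊢
    rw [pow_mul, Real.sq_sqrt hld']
  have hnp : ((n:ℝ) ^ ((r:ℝ)/(ℓ:ℝ))) ^ ℓ = (n:ℝ) ^ r := by
    have hn0 : (0:ℝ) ≤ (n:ℝ) := Nat.cast_nonneg n
    have hℓne : ((ℓ:ℕ):ℝ) ≠ 0 := Nat.cast_ne_zero.mpr hℓpos.ne'
    rw [← Real.rpow_natCast ((n:ℝ) ^ ((r:ℝ)/(ℓ:ℝ))) ℓ, ← Real.rpow_mul hn0,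
      div_mul_cancel₀ _ hℓne, Real.rpow_natCast]
  have hRHSpow : (2 * (n : ℝ) ^ ((r : ℝ) / ℓ) * Real.sqrt ((ℓ : ℝ) / d)) ^ ℓ
      = 2 ^ ℓ * (n:ℝ) ^ r * ((ℓ:ℝ)/d) ^ m := by
    rw [mul_pow, mul_pow, hsq, hnp]
  apply lt_of_pow_lt_pow_left₀ ℓ hRHS0
  rw [hRHSpow]
  by_cases hcase : d ≤ 4 * (ℓ:ℝ)
  · -- easy case: `d ≤ 4ℓ`, the norm is `< 1 ≤ RHS`.
    set Dm : ℕ := Finset.univ.sup (fun S : KikuchiVert n r => kikuchiDeg H S) with hDm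
    have hdeg : ∀ S : KikuchiVert n r, kikuchiDeg H S ≤ Dm :=
      fun S => Finset.le_sup (Finset.mem_univ S)
    set ρ : ℝ := (Dm:ℝ)/((Dm:ℝ)+d) with hρ
    have hDm0 : (0:ℝ) ≤ (Dm:ℝ) := Nat.cast_nonneg _
    have hρ0 : 0 ≤ ρ := by rw [hρ]; positivity
    have hρ1 : ρ < 1 := by
      rw [hρ, div_lt_one (by linarith)]
      linarith
    have hrow : ∀ S : KikuchiVert n r, ∑ T, Bmat n r H d S T ≤ ρ := by
      intro S
      rw [Bmat_row_sum]
      have hg : gam H d S = (kikuchiDeg H S : ℝ) + d := rfl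
      rw [hg, ← div_eq_mul_inv, hρ]
      have ha : (0:ℝ) ≤ (kikuchiDeg H S : ℝ) := Nat.cast_nonneg _
      have hab : (kikuchiDeg H S : ℝ) ≤ (Dm:ℝ) := by exact_mod_cast hdeg S
      rw [div_le_div_iff₀ (by linarith) (by linarith)]
      nlinarith
    have htr : Matrix.trace (Bmat n r H d ^ ℓ) ≤ (N:ℝ) * ρ ^ ℓ := by
      rw [trace_eq_sum_diag]
      calc ∑ S, (Bmat n r H d ^ ℓ) S S
          ≤ ∑ S : KikuchiVert n r, ∑ T, (Bmat n r H d ^ ℓ) S T := by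
            apply Finset.sum_le_sum
            intro S _
            exact Finset.single_le_sum (fun T _ => Bpow_nonneg hd0 ℓ S T) (Finset.mem_univ S)
        _ ≤ ∑ _S : KikuchiVert n r, ρ ^ ℓ :=
            Finset.sum_le_sum (fun S _ => Bpow_rowsum_le hd0 hρ0 hrow ℓ S)
        _ = (N:ℝ) * ρ ^ ℓ := by
            rw [Finset.sum_const, Finset.card_univ, nsmul_eq_mul, hN]
    have hlt1 : (N:ℝ) * ρ ^ ℓ < (N:ℝ) := by
      have hρℓ : ρ ^ ℓ < 1 := pow_lt_one₀ hρ0 hρ1 hℓpos.ne'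
      have hN0 : (0:ℝ) < (N:ℝ) := by exact_mod_cast hN1
      nlinarith
    have hone : (1:ℝ) ≤ 2 ^ ℓ * ((ℓ:ℝ)/d) ^ m := by
      have h2 : (2:ℝ) ^ ℓ = 4 ^ m := by
        rw [hℓ2, pow_mul]
        norm_num
      rw [h2, ← mul_pow]
      apply one_le_pow₀
      rw [← mul_div_assoc]
      exact (one_le_div hd0).mpr hcase
    have hfin : (n:ℝ)^r ≤ 2 ^ ℓ * (n:ℝ) ^ r * ((ℓ:ℝ)/d) ^ m := by
      have hnr0 : (0:ℝ) ≤ (n:ℝ)^r := by positivity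
      calc (n:ℝ)^r = (n:ℝ)^r * 1 := by ring
        _ ≤ (n:ℝ)^r * (2 ^ ℓ * ((ℓ:ℝ)/d) ^ m) := by
            apply mul_le_mul_of_nonneg_left hone hnr0
        _ = 2 ^ ℓ * (n:ℝ) ^ r * ((ℓ:ℝ)/d) ^ m := by ring
    calc specNorm Mx ^ ℓ ≤ Matrix.trace (Bmat n r H d ^ ℓ) := hB ▸ hA
      _ ≤ (N:ℝ) * ρ ^ ℓ := htr
      _ < (N:ℝ) := hlt1
      _ ≤ (n:ℝ)^r := hNle
      _ ≤ 2 ^ ℓ * (n:ℝ) ^ r * ((ℓ:ℝ)/d) ^ m := hfin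
  · -- main case: `d > 4ℓ`; use the even-cover walk counting.
    push_neg at hcase
    set q : ℝ := (m:ℝ)/d with hq
    have hq0 : 0 < q := by rw [hq]; positivity
    have hmℓ : (m:ℝ) ≤ (ℓ:ℝ) := by exact_mod_cast (by omega : m ≤ ℓ)
    have hℓ0 : (0:ℝ) ≤ (ℓ:ℝ) := Nat.cast_nonneg _
    have hq1 : q ≤ 1 := by
      rw [hq, div_le_one hd0]
      linarith
    -- walk counting bound
    have hwalks : Matrix.trace (Bmat n r H d ^ ℓ)
        ≤ ∑ _S : KikuchiVert n r, Pb q ℓ m := by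
      rw [trace_Bpow_eq_walks]
      apply Finset.sum_le_sum
      intro S _
      have hWBle : WB H d m ℓ S ∅ ≤ Pb q ℓ m := by
        have := WB_le_Pb (H := H) hd0 m ℓ S ∅
        simpa using this
      refine le_trans ?_ hWBle
      rw [WB]
      apply Finset.sum_le_sum
      intro cs _
      by_cases hz : wS H d (List.ofFn cs) S (fun T => if T = S then 1 else 0) = 0
      · rw [hz]
        split
        · exact wS_nonneg hd0 _ _ _ (fun _ => zero_le_one)
        · exact le_rfl
      · obtain ⟨hmemH, W, hφ, hWval⟩ := wS_ne_zero (List.ofFn cs) S _ hz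
        have hWS : W = S := by
          by_contra hne
          rw [if_neg hne] at hφ
          exact hφ rfl
        have hfold : (List.ofFn cs).foldr symmDiff ∅ = ∅ := by
          rw [hWS] at hWval
          have : symmDiff S.1 ((List.ofFn cs).foldr symmDiff ∅) = S.1 := hWval.symm
          have hbot := symmDiff_eq_left.mp this
          rwa [Finset.bot_eq_empty] at hbot
        have hlen : (List.ofFn cs).length = ℓ := List.length_ofFn (f := cs)
        have hsmall := closed_walk_card hcover (List.ofFn cs) (le_of_eq hlen) hmemH hfold
        rw [hlen] at hsmall
        have hcard : ((List.ofFn cs).toFinset).card ≤ m := by omega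
        rw [if_pos (by rwa [Finset.empty_union])]
        apply wS_mono hd0
        intro T
        split <;> norm_num
    have hPb : Pb q ℓ m ≤ 2 ^ ℓ * q ^ m := by
      have := Pb_le (le_of_lt hq0) hq1 ℓ m
      have hsub : ℓ - m = m := by omega
      rwa [hsub] at this
    have htr2 : Matrix.trace (Bmat n r H d ^ ℓ) ≤ (N:ℝ) * (2 ^ ℓ * q ^ m) := by
      calc Matrix.trace (Bmat n r H d ^ ℓ) ≤ ∑ _S : KikuchiVert n r, Pb q ℓ m := hwalks
        _ = (N:ℝ) * Pb q ℓ m := by rw [Finset.sum_const, Finset.card_univ, nsmul_eq_mul, hN]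
        _ ≤ (N:ℝ) * (2 ^ ℓ * q ^ m) := by
            apply mul_le_mul_of_nonneg_left hPb
            exact_mod_cast Nat.zero_le N
    -- compare with RHS
    have hℓcast : ((ℓ:ℕ):ℝ) = 2 * (m:ℝ) := by exact_mod_cast congrArg (Nat.cast : ℕ → ℝ) hℓ2
    have hfrac : ((ℓ:ℝ)/d) ^ m = 2 ^ m * q ^ m := by
      rw [hℓcast, hq, ← mul_pow]
      congr 1
      ring
    have hqm0 : (0:ℝ) < q ^ m := pow_pos hq0 m
    have hnr0 : (0:ℝ) < (n:ℝ) ^ r := by positivity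
    have h2ℓ0 : (0:ℝ) < 2 ^ ℓ := by positivity
    have h2m : (1:ℝ) < 2 ^ m := one_lt_pow₀ (by norm_num) hm0.ne'
    calc specNorm Mx ^ ℓ ≤ Matrix.trace (Bmat n r H d ^ ℓ) := hB ▸ hA
      _ ≤ (N:ℝ) * (2 ^ ℓ * q ^ m) := htr2
      _ ≤ (n:ℝ)^r * (2 ^ ℓ * q ^ m) := by
          apply mul_le_mul_of_nonneg_right hNle
          positivity
      _ < (n:ℝ)^r * (2 ^ ℓ * (2 ^ m * q ^ m)) := by
          have hpos : (0:ℝ) < (n:ℝ)^r * 2 ^ ℓ * q ^ m := by positivity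
          nlinarith
      _ = 2 ^ ℓ * (n:ℝ) ^ r * ((ℓ:ℝ)/d) ^ m := by rw [hfrac]; ring
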